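/- Under the conditions of Lemma 3.2 with n = 2 and unit weights: if X₁, X₂ are conditionally independent given G with common subexponential distribution F satisfying Assumption D3, then P(X₁ > x, X₂ > x) = o(F̄(x)) as x → ∞. -/

import Mathlib

open MeasureTheory ProbabilityTheory Filter Topology Set

/-- The (right) tail function of a measure on `ℝ`. -/
noncomputable def tail (μ : MeasureTheory.Measure ℝ) (x : ℝ) : ℝ := (μ (Set.Ioi x)).toReal

/-- A distribution is long-tailed if `F̄(x+y) ~ F̄(x)` for every `y`. -/
def LongTailed (μ : MeasureTheory.Measure ℝ) : Prop :=
  (∀ x : ℝ, 0 < μ (Set.Ioi x)) ∧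
  ∀ y : ℝ, Filter.Tendsto (fun x => tail μ (x + y) / tail μ x) Filter.atTop (nhds 1)

/-- A distribution supported on `[0,∞)` is subexponential if `F̄^{*2}(x) ~ 2 F̄(x)`. -/
def Subexponential (μ : MeasureTheory.Measure ℝ) : Prop :=
  (∀ x : ℝ, 0 < μ (Set.Ioi x)) ∧ μ (Set.Iio 0) = 0 ∧
  Filter.Tendsto (fun x => tail (μ.conv μ) x / tail μ x) Filter.atTop (nhds 2)

/-- Membership in the class `H(F)` of insensitivity functions of a long-tailed `F`. -/
structure MemH (μ : MeasureTheory.Measure ℝ) (h : ℝ → ℝ) : Prop where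
  nonneg : ∀ x, 0 ≤ x → 0 ≤ h x
  mono : MonotoneOn h (Set.Ici 0)
  tendsto_atTop : Filter.Tendsto h Filter.atTop Filter.atTop
  ratio_anti : AntitoneOn (fun x => h x / x) (Set.Ioi 0)
  ratio_zero : Filter.Tendsto (fun x => h x / x) Filter.atTop (nhds 0)
  tail_insensitive :
    Filter.Tendsto (fun x => tail μ (x - h x) / tail μ x) Filter.atTop (nhds 1)

/-- Assumption D3 of Foss–Richards (2010) with insensitivity function `h ∈ H(F)`:
there are a nondecreasing `r` and events `Bᵢ(x) ∈ G` increasing to `Ω` with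
`P(Xᵢ > x | G) 1(Bᵢ(x)) ≤ r(x) F̄(x) 1(Bᵢ(x))` a.s., `P(Bᵢ(h(x))ᶜ) = o(F̄(x))`
uniformly in `i`, `r(x) F̄(h(x)) = o(1)` and
`r(x) ∫_{h(x)}^{x-h(x)} F̄(x-y) F(dy) = o(F̄(x))`. -/
def AssumptionD3 {Ω : Type*} [MeasurableSpace Ω] (P : MeasureTheory.Measure Ω)
    (G : MeasurableSpace Ω) {ι : Type*} (X : ι → Ω → ℝ)
    (μ : MeasureTheory.Measure ℝ) (h : ℝ → ℝ) : Prop :=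
  ∃ (r : ℝ → ℝ) (B : ι → ℝ → Set Ω),
    Monotone r ∧
    (∀ i x, MeasurableSet[G] (B i x)) ∧
    (∀ i, Monotone (B i)) ∧
    (∀ i, (⋃ x : ℝ, B i x) = Set.univ) ∧
    (∀ i x, ∀ᵐ ω ∂P, ω ∈ B i x →
      (P[Set.indicator {ω' | x < X i ω'} (fun _ => (1 : ℝ)) | G]) ω ≤ r x * tail μ x) ∧
    (∀ ε : ℝ, 0 < ε → ∀ᶠ x in Filter.atTop, ∀ i,
      (P ((B i (h x))ᶜ)).toReal ≤ ε * tail μ x) ∧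
    Filter.Tendsto (fun x => r x * tail μ (h x)) Filter.atTop (nhds 0) ∧
    Filter.Tendsto (fun x =>
        (r x * ∫ y in Set.Ioc (h x) (x - h x), tail μ (x - y) ∂μ) / tail μ x)
      Filter.atTop (nhds 0)

/-- For two conditionally independent random variables with common subexponential
distribution satisfying Assumption D3, the joint tail is negligible:
`P(X₁ > x, X₂ > x) = o(F̄(x))`. -/
theorem joint_tail_negligible
    {Ω : Type*} (G : MeasurableSpace Ω) [mΩ : MeasurableSpace Ω] [StandardBorelSpace Ω]
    (P : MeasureTheory.Measure Ω) [MeasureTheory.IsProbabilityMeasure P]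
    (hG : G ≤ mΩ)
    (μ : MeasureTheory.Measure ℝ) [MeasureTheory.IsProbabilityMeasure μ]
    (hS : Subexponential μ)
    (X : Fin 2 → Ω → ℝ) (hXmeas : ∀ i, Measurable (X i))
    (hD1 : ProbabilityTheory.iCondIndepFun (mΩ := mΩ) G hG X P)
    (hdist : ∀ i, MeasureTheory.Measure.map (X i) P = μ)
    (h : ℝ → ℝ) (hmemH : MemH μ h) (hD3 : AssumptionD3 P G X μ h) :
    Filter.Tendsto
      (fun x => (P {ω | x < X 0 ω ∧ x < X 1 ω}).toReal / tail μ x)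
      Filter.atTop (nhds 0) := by
  classical
  obtain ⟨r, B, hrmono, hBmeas, hBmono, hBunion, hBbound, hBeps, hrF, hint⟩ := hD3
  -- basic facts about the tail
  have htail_pos : ∀ x : ℝ, 0 < tail μ x := by
    intro x
    exact ENNReal.toReal_pos (hS.1 x).ne' (measure_ne_top μ _)
  have htail_le_one : ∀ x : ℝ, tail μ x ≤ 1 := by
    intro x
    have := ENNReal.toReal_mono ENNReal.one_ne_top (prob_le_one (μ := μ) (s := Set.Ioi x))
    simpa [tail] using this
  have htail_anti : ∀ ⦃x y : ℝ⦄, x ≤ y → tail μ y ≤ tail μ x := by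
    intro x y hxy
    exact ENNReal.toReal_mono (measure_ne_top μ _) (measure_mono (Set.Ioi_subset_Ioi hxy))
  -- the conditional tail functions
  set g : Fin 2 → ℝ → Ω → ℝ :=
    fun i x => P[Set.indicator {ω' | x < X i ω'} (fun _ => (1 : ℝ)) | G] with hg_def
  have hAmeas : ∀ (i : Fin 2) (x : ℝ), MeasurableSet {ω' | x < X i ω'} := fun i x =>
    (hXmeas i) measurableSet_Ioi
  have hAint : ∀ (i : Fin 2) (x : ℝ),
      Integrable (Set.indicator {ω' | x < X i ω'} (fun _ => (1 : ℝ))) P := fun i x =>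
    (integrable_const (1:ℝ)).indicator (hAmeas i x)
  have hPA : ∀ (i : Fin 2) (x : ℝ), (P {ω' | x < X i ω'}).toReal = tail μ x := by
    intro i x
    have : P {ω' | x < X i ω'} = μ (Set.Ioi x) := by
      rw [← hdist i, Measure.map_apply (hXmeas i) measurableSet_Ioi]
      rfl
    rw [this]; rfl
  have hg_nonneg : ∀ (i : Fin 2) (x : ℝ), 0 ≤ᵐ[P] g i x := by
    intro i x
    exact condExp_nonneg (Filter.Eventually.of_forall fun ω =>
      Set.indicator_nonneg (fun _ _ => zero_le_one) ω)
  have hg_le_one : ∀ (i : Fin 2) (x : ℝ), g i x ≤ᵐ[P] fun _ => (1:ℝ) := by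
    intro i x
    have h1 : g i x ≤ᵐ[P] P[(fun _ => (1:ℝ)) | G] :=
      condExp_mono (hAint i x) (integrable_const 1)
        (Filter.Eventually.of_forall fun ω => Set.indicator_le_self' (fun _ _ => zero_le_one) ω)
    calc g i x ≤ᵐ[P] P[(fun _ => (1:ℝ)) | G] := h1
      _ =ᵐ[P] fun _ => (1:ℝ) := by rw [condExp_const hG]
  have hg_int : ∀ (i : Fin 2) (x : ℝ), Integrable (g i x) P := fun i x => integrable_condExp
  have hg_integral : ∀ (i : Fin 2) (x : ℝ), ∫ ω, g i x ω ∂P = tail μ x := by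
    intro i x
    have h1 : ∫ ω, g i x ω ∂P = ∫ ω, Set.indicator {ω' | x < X i ω'} (fun _ => (1:ℝ)) ω ∂P :=
      integral_condExp hG
    rw [h1, integral_indicator_const (1:ℝ) (hAmeas i x), smul_eq_mul, mul_one, measureReal_def, hPA i x]
  -- conditional independence: product formula
  have hCI : ProbabilityTheory.CondIndepFun G hG (X 0) (X 1) P :=
    hD1.condIndepFun (by decide : (0 : Fin 2) ≠ 1)
  have hprod : ∀ x : ℝ,
      (P[Set.indicator {ω | x < X 0 ω ∧ x < X 1 ω} (fun _ => (1:ℝ)) | G]) =ᵐ[P]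
        fun ω => g 0 x ω * g 1 x ω := by
    intro x
    have := (ProbabilityTheory.condIndepFun_iff_condExp_inter_preimage_eq_mul
      (hXmeas 0) (hXmeas 1)).mp hCI (Set.Ioi x) (Set.Ioi x) measurableSet_Ioi measurableSet_Ioi
    have hset : X 0 ⁻¹' Set.Ioi x ∩ X 1 ⁻¹' Set.Ioi x = {ω | x < X 0 ω ∧ x < X 1 ω} := rfl
    have hset0 : X 0 ⁻¹' Set.Ioi x = {ω' | x < X 0 ω'} := rfl
    have hset1 : X 1 ⁻¹' Set.Ioi x = {ω' | x < X 1 ω'} := rfl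
    rw [hset, hset0, hset1] at this
    exact this
  have hPS : ∀ x : ℝ, (P {ω | x < X 0 ω ∧ x < X 1 ω}).toReal = ∫ ω, g 0 x ω * g 1 x ω ∂P := by
    intro x
    have hSmeas : MeasurableSet {ω | x < X 0 ω ∧ x < X 1 ω} := (hAmeas 0 x).inter (hAmeas 1 x)
    have hSint : Integrable (Set.indicator {ω | x < X 0 ω ∧ x < X 1 ω} (fun _ => (1:ℝ))) P :=
      (integrable_const (1:ℝ)).indicator hSmeas
    have h2 : ∫ ω, (P[Set.indicator {ω | x < X 0 ω ∧ x < X 1 ω} (fun _ => (1:ℝ)) | G]) ω ∂P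
        = ∫ ω, Set.indicator {ω | x < X 0 ω ∧ x < X 1 ω} (fun _ => (1:ℝ)) ω ∂P :=
      integral_condExp hG
    rw [← integral_congr_ae (hprod x), h2,
      integral_indicator_const (1:ℝ) hSmeas, smul_eq_mul, mul_one, measureReal_def]
  -- key inequality, for x with 0 ≤ r x
  have hkey : ∀ x : ℝ, 0 ≤ r x →
      (P {ω | x < X 0 ω ∧ x < X 1 ω}).toReal ≤
        r x * tail μ x * tail μ x + (P ((B 0 x)ᶜ)).toReal := by
    intro x hrx
    rw [hPS x]
    have hBm : MeasurableSet ((B 0 x)ᶜ) := (hG _ (hBmeas 0 x)).compl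
    have hRHSint : Integrable
        (fun ω => r x * tail μ x * g 1 x ω + Set.indicator ((B 0 x)ᶜ) (fun _ => (1:ℝ)) ω) P :=
      ((hg_int 1 x).const_mul _).add ((integrable_const (1:ℝ)).indicator hBm)
    have hle : ∀ᵐ ω ∂P, g 0 x ω * g 1 x ω ≤
        r x * tail μ x * g 1 x ω + Set.indicator ((B 0 x)ᶜ) (fun _ => (1:ℝ)) ω := by
      filter_upwards [hBbound 0 x, hg_nonneg 0 x, hg_nonneg 1 x, hg_le_one 0 x, hg_le_one 1 x]
        with ω hb h0n' h1n' h0l' h1l'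
      have h0n : (0:ℝ) ≤ g 0 x ω := h0n'
      have h1n : (0:ℝ) ≤ g 1 x ω := h1n'
      have h0l : g 0 x ω ≤ 1 := h0l'
      have h1l : g 1 x ω ≤ 1 := h1l'
      by_cases hmem : ω ∈ B 0 x
      · have hb' : g 0 x ω ≤ r x * tail μ x := hb hmem
        have h1 : g 0 x ω * g 1 x ω ≤ r x * tail μ x * g 1 x ω :=
          mul_le_mul_of_nonneg_right hb' h1n
        have h2 : (0:ℝ) ≤ Set.indicator ((B 0 x)ᶜ) (fun _ => (1:ℝ)) ω :=
          Set.indicator_nonneg (fun _ _ => zero_le_one) ω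
        linarith
      · have hind : Set.indicator ((B 0 x)ᶜ) (fun _ => (1:ℝ)) ω = 1 :=
          Set.indicator_of_mem (Set.mem_compl hmem) _
        have h1 : g 0 x ω * g 1 x ω ≤ 1 := by nlinarith
        have h2 : (0:ℝ) ≤ r x * tail μ x * g 1 x ω :=
          mul_nonneg (mul_nonneg hrx (htail_pos x).le) h1n
        rw [hind]
        linarith
    have hnn : 0 ≤ᵐ[P] fun ω => g 0 x ω * g 1 x ω := by
      filter_upwards [hg_nonneg 0 x, hg_nonneg 1 x] with ω h0 h1
      exact mul_nonneg h0 h1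
    calc ∫ ω, g 0 x ω * g 1 x ω ∂P
        ≤ ∫ ω, (r x * tail μ x * g 1 x ω + Set.indicator ((B 0 x)ᶜ) (fun _ => (1:ℝ)) ω) ∂P :=
          integral_mono_of_nonneg hnn hRHSint hle
      _ = r x * tail μ x * tail μ x + (P ((B 0 x)ᶜ)).toReal := by
          rw [integral_add ((hg_int 1 x).const_mul _) ((integrable_const (1:ℝ)).indicator hBm),
            integral_const_mul, hg_integral 1 x, integral_indicator_const (1:ℝ) hBm,
            smul_eq_mul, mul_one, measureReal_def]
  -- eventual facts
  have hhx : ∀ᶠ x in Filter.atTop, h x ≤ x := by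
    have h1 := (hmemH.ratio_zero).eventually (eventually_lt_nhds (by norm_num : (0:ℝ) < 1))
    filter_upwards [h1, Filter.eventually_gt_atTop (0:ℝ)] with x hx hx0
    nlinarith [(div_lt_one hx0).mp hx]
  have hrpos : ∀ᶠ x in Filter.atTop, 0 ≤ r x := by
    filter_upwards [hBeps (1/2) (by norm_num), hhx] with x hx hhxx
    by_contra hneg
    push_neg at hneg
    -- then a.e. ω ∉ B 0 x, so B 0 (h x) is null, contradicting the bound
    have hBnull : P (B 0 x) = 0 := by
      have hae : ∀ᵐ ω ∂P, ω ∉ B 0 x := by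
        filter_upwards [hBbound 0 x, hg_nonneg 0 x] with ω hb h0
        intro hmem
        have hb' : g 0 x ω ≤ r x * tail μ x := hb hmem
        have h0' : (0:ℝ) ≤ g 0 x ω := h0
        nlinarith [htail_pos x]
      simpa [ae_iff] using hae
    have hsub : B 0 (h x) ⊆ B 0 x := hBmono 0 hhxx
    have hnull : P (B 0 (h x)) = 0 := measure_mono_null hsub hBnull
    have hcompl : P ((B 0 (h x))ᶜ) = 1 := by
      rw [prob_compl_eq_one_sub (hG _ (hBmeas 0 (h x))), hnull, tsub_zero]
    have := hx 0
    rw [hcompl] at this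
    simp only [ENNReal.toReal_one] at this
    nlinarith [htail_le_one x, htail_pos x]
  -- squeeze
  have hsqueeze : ∀ ε : ℝ, 0 < ε → ∀ᶠ x in Filter.atTop,
      (P {ω | x < X 0 ω ∧ x < X 1 ω}).toReal / tail μ x < ε := by
    intro ε hε
    have hc := hrF.eventually (eventually_lt_nhds (by positivity : (0:ℝ) < ε/2))
    filter_upwards [hhx, hrpos, hBeps (ε/4) (by positivity), hc] with x hhxx hrx hB hcc
    have hBsub : (P ((B 0 x)ᶜ)).toReal ≤ (P ((B 0 (h x))ᶜ)).toReal := by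
      refine ENNReal.toReal_mono (measure_ne_top P _) (measure_mono ?_)
      exact Set.compl_subset_compl.mpr (hBmono 0 hhxx)
    have h1 := hkey x hrx
    have h2 : r x * tail μ x ≤ r x * tail μ (h x) :=
      mul_le_mul_of_nonneg_left (htail_anti hhxx) hrx
    have htp := htail_pos x
    rw [div_lt_iff₀ htp]
    nlinarith [mul_le_mul_of_nonneg_right h2 htp.le, mul_lt_mul_of_pos_right hcc htp,
      hB 0, hBsub, h1, htail_le_one x]
  rw [NormedAddCommGroup.tendsto_nhds_zero]
  intro ε hε
  filter_upwards [hsqueeze ε hε] with x hx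
  rw [Real.norm_eq_abs, abs_of_nonneg (div_nonneg ENNReal.toReal_nonneg (htail_pos x).le)]
  exact hx
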